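/- arXiv:2305.03594 — 3 statements merged into one kernel-verified Lean document; each statement's English description precedes it below -/
import Mathlib

section
/- Let X be a nonempty set, let U and V be real Banach spaces whose elements are real-valued functions on X and such that for every x ∈ X the evaluation maps w ↦ w(x) are continuous linear functionals on U and on V. Let T : dom(T) ⊆ U → V be a closed linear operator, let (Ω, Σ, P) be a probability space, let u : Ω → U satisfy u(ω) ∈ dom(T) P-a.s., and set v(ω) := T(u(ω)). Suppose ∫_Ω ‖u(ω)‖_U² dP(ω) < ∞ and ∫_Ω ‖v(ω)‖_V² dP(ω) < ∞, and write m_u := E[u] ∈ U and m_v := E[v] ∈ V for the Bochner means. Then for every x₁ ∈ X, the element w := E[(u(x₁) − m_u(x₁)) · (u − m_u)] of U (a Bochner integral, where u(x₁) denotes ω ↦ u(ω)(x₁)) belongs to dom(T), and for every x₂ ∈ X, (T w)(x₂) = E[(u(x₁) − m_u(x₁)) · (v(x₂) − m_v(x₂))], i.e., T applied to the second argument of the covariance function k_u(x₁, ·) of u yields the cross-covariance function x₂ ↦ Cov(u(x₁), v(x₂)). -/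
open MeasureTheory

/-- Part of the covariance computation in the paper's main theorem: `U` and `V` are real
Banach spaces of real-valued functions on `X` (realised by injective linear maps
`ιU`, `ιV` into `X → ℝ` with continuous point evaluations); `T` is a closed linear operator
with `v ω = T (u ω)` a.s.; `u`, `v` are square-Bochner-integrable. Then, for each `x₁`,
the `U`-valued Bochner mean `E[(u(x₁) − m_u(x₁)) • (u − m_u)]` lies in `dom T` and `T` of it,
evaluated at any `x₂`, is the cross-covariance `Cov(u(x₁), v(x₂))`. -/
theorem stmt_3 {X : Type*} [Nonempty X] {U V : Type*}
    [NormedAddCommGroup U] [NormedSpace ℝ U] [CompleteSpace U]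
    [NormedAddCommGroup V] [NormedSpace ℝ V] [CompleteSpace V]
    (ιU : U →ₗ[ℝ] (X → ℝ)) (hιU : Function.Injective ιU)
    (hevU : ∀ x : X, Continuous fun w : U => ιU w x)
    (ιV : V →ₗ[ℝ] (X → ℝ)) (hιV : Function.Injective ιV)
    (hevV : ∀ x : X, Continuous fun w : V => ιV w x)
    (T : U →ₗ.[ℝ] V) (hT : T.IsClosed)
    {Ω : Type*} [MeasurableSpace Ω] (P : Measure Ω) [IsProbabilityMeasure P]
    (u : Ω → U) (v : Ω → V)
    (huv : ∀ᵐ ω ∂P, (u ω, v ω) ∈ T.graph)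
    (hu2 : MemLp u 2 P) (hv2 : MemLp v 2 P)
    (x₁ : X) :
    ∃ hmem : (∫ ω, (ιU (u ω) x₁ - ιU (∫ ω', u ω' ∂P) x₁) • (u ω - ∫ ω', u ω' ∂P) ∂P)
        ∈ T.domain,
      ∀ x₂ : X,
        ιV (T ⟨_, hmem⟩) x₂ =
          ∫ ω, (ιU (u ω) x₁ - ιU (∫ ω', u ω' ∂P) x₁) *
            (ιV (v ω) x₂ - ιV (∫ ω', v ω' ∂P) x₂) ∂P := by
  set mu := ∫ ω', u ω' ∂P with hmu
  set mv := ∫ ω', v ω' ∂P with hmv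
  -- evaluation at x₁ as a continuous linear functional on U
  let e₁ : U →L[ℝ] ℝ := ⟨⟨⟨fun w => ιU w x₁, fun a b => by simp⟩, fun r a => by simp⟩, hevU x₁⟩
  have e₁_apply : ∀ w : U, e₁ w = ιU w x₁ := fun w => rfl
  have one_le_two : (1 : ENNReal) ≤ 2 := by norm_num
  have hu1 : Integrable u P := hu2.integrable one_le_two
  have hv1 : Integrable v P := hv2.integrable one_le_two
  have hcu2 : MemLp (fun ω => u ω - mu) 2 P := hu2.sub (memLp_const mu)
  have hcv2 : MemLp (fun ω => v ω - mv) 2 P := hv2.sub (memLp_const mv)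
  have hc2 : MemLp (fun ω => ιU (u ω) x₁ - ιU mu x₁) 2 P := by
    have h := e₁.comp_memLp' hcu2
    simpa [Function.comp_def, map_sub, e₁_apply] using h
  have hpqr : (1 : ENNReal) / 1 = 1 / 2 + 1 / 2 := by
    rw [ENNReal.div_self (by norm_num) (by norm_num)]
    norm_num [ENNReal.inv_two_add_inv_two]
  have hA : Integrable (fun ω => (ιU (u ω) x₁ - ιU mu x₁) • (u ω - mu)) P := by
    rw [← memLp_one_iff_integrable]
    exact hcu2.smul (r := 1) hc2
  have hB : Integrable (fun ω => (ιU (u ω) x₁ - ιU mu x₁) • (v ω - mv)) P := by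
    rw [← memLp_one_iff_integrable]
    exact hcv2.smul (r := 1) hc2
  -- the mean pair lies in the (closed) graph
  have hmm : (mu, mv) ∈ T.graph := by
    have h := (T.graph.convex).integral_mem hT huv (hu1.prodMk hv1)
    rwa [integral_pair hu1 hv1] at h
  -- the weighted centred pair lies a.e. in the graph
  have hfs : ∀ᵐ ω ∂P,
      ((ιU (u ω) x₁ - ιU mu x₁) • (u ω - mu), (ιU (u ω) x₁ - ιU mu x₁) • (v ω - mv))
        ∈ T.graph := by
    filter_upwards [huv] with ω h
    have h2 : (u ω - mu, v ω - mv) ∈ T.graph := T.graph.sub_mem h hmm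
    simpa [Prod.smul_mk] using T.graph.smul_mem (ιU (u ω) x₁ - ιU mu x₁) h2
  have key : ((∫ ω, (ιU (u ω) x₁ - ιU mu x₁) • (u ω - mu) ∂P),
      (∫ ω, (ιU (u ω) x₁ - ιU mu x₁) • (v ω - mv) ∂P)) ∈ T.graph := by
    have h := (T.graph.convex).integral_mem hT hfs (hA.prodMk hB)
    rwa [integral_pair hA hB] at h
  obtain ⟨y, hy1, hy2⟩ := T.mem_graph_iff.mp key
  dsimp only at hy1 hy2
  refine ⟨hy1 ▸ y.2, fun x₂ => ?_⟩
  have hyy : (⟨_, hy1 ▸ y.2⟩ : T.domain) = y := Subtype.ext hy1.symm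
  rw [hyy, hy2]
  -- evaluation at x₂ as a continuous linear functional on V
  let e₂ : V →L[ℝ] ℝ := ⟨⟨⟨fun w => ιV w x₂, fun a b => by simp⟩, fun r a => by simp⟩, hevV x₂⟩
  have e₂_apply : ∀ w : V, e₂ w = ιV w x₂ := fun w => rfl
  have h := e₂.integral_comp_comm hB
  calc ιV (∫ ω, (ιU (u ω) x₁ - ιU mu x₁) • (v ω - mv) ∂P) x₂
      = e₂ (∫ ω, (ιU (u ω) x₁ - ιU mu x₁) • (v ω - mv) ∂P) := rfl
    _ = ∫ ω, e₂ ((ιU (u ω) x₁ - ιU mu x₁) • (v ω - mv)) ∂P := h.symm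
    _ = ∫ ω, (ιU (u ω) x₁ - ιU mu x₁) * (ιV (v ω) x₂ - ιV mv x₂) ∂P := by
        refine integral_congr_ae (Filter.Eventually.of_forall fun ω => ?_)
        simp only [_root_.map_smul, map_sub, smul_eq_mul, e₂_apply, Pi.smul_apply, Pi.sub_apply]
end

section
/- Let X be a nonempty set, let U and V be real Banach spaces whose elements are real-valued functions on X and such that for every x ∈ X the evaluation maps w ↦ w(x) are continuous linear functionals on U and on V. Let T : dom(T) ⊆ U → V be a closed linear operator, let (Ω, Σ, P) be a probability space, let u : Ω → U satisfy u(ω) ∈ dom(T) P-a.s., and set v(ω) := T(u(ω)). Suppose ∫_Ω ‖u(ω)‖_U² dP(ω) < ∞ and ∫_Ω ‖v(ω)‖_V² dP(ω) < ∞, and write m_u := E[u], m_v := E[v] for the Bochner means and k_u(x₁,x₂) := Cov(u(x₁), u(x₂)), k_v(x₁,x₂) := Cov(v(x₁), v(x₂)) for the covariance functions. Then for all x₁, x₂ ∈ X, the covariance k_v(x₁, x₂) is obtained from k_u by applying T successively in each argument, in either order: k_v(x₁, x₂) = (T E[(v(x₂) − m_v(x₂))(u − m_u)])(x₁) = (T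 E[(v(x₁) − m_v(x₁))(u − m_u)])(x₂), where for each fixed x ∈ X the U-valued Bochner mean E[(v(x) − m_v(x))(u − m_u)] belongs to dom(T), and where for each fixed x₁ the function x ↦ Cov(u(x₁), v(x)) equals T applied to the element E[(u(x₁) − m_u(x₁))(u − m_u)] ∈ dom(T) of U. In particular, applying T first in the second argument of k_u and then in the first yields the same function as applying T first in the first argument and then in the second, namely k_v. -/
open MeasureTheory
open scoped ENNReal

/-- Pointwise form of part (b) of the paper's main theorem: `k_v = T₁ T₂ k_u = T₂ T₁ k_u`.
For each `x`, the `U`-valued Bochner means `E[(v(x) − m_v(x)) • (u − m_u)]` and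
`E[(u(x) − m_u(x)) • (u − m_u)]` lie in `dom T`; applying `T` to the former and
evaluating at `x₁` recovers `k_v(x₁, x₂)` (in either order of the arguments), and applying
`T` to the latter, evaluated at `x₂`, gives the cross-covariance `Cov(u(x₁), v(x₂))`. -/
theorem stmt_5 {X : Type*} [Nonempty X] {U V : Type*}
    [NormedAddCommGroup U] [NormedSpace ℝ U] [CompleteSpace U]
    [NormedAddCommGroup V] [NormedSpace ℝ V] [CompleteSpace V]
    (ιU : U →ₗ[ℝ] (X → ℝ)) (hιU : Function.Injective ιU)
    (hevU : ∀ x : X, Continuous fun w : U => ιU w x)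
    (ιV : V →ₗ[ℝ] (X → ℝ)) (hιV : Function.Injective ιV)
    (hevV : ∀ x : X, Continuous fun w : V => ιV w x)
    (T : U →ₗ.[ℝ] V) (hT : T.IsClosed)
    {Ω : Type*} [MeasurableSpace Ω] (P : Measure Ω) [IsProbabilityMeasure P]
    (u : Ω → U) (v : Ω → V)
    (huv : ∀ᵐ ω ∂P, (u ω, v ω) ∈ T.graph)
    (hu2 : MemLp u 2 P) (hv2 : MemLp v 2 P) :
    ∃ hdomv : ∀ x : X,
        (∫ ω, (ιV (v ω) x - ιV (∫ ω', v ω' ∂P) x) • (u ω - ∫ ω', u ω' ∂P) ∂P) ∈ T.domain,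
    ∃ hdomu : ∀ x : X,
        (∫ ω, (ιU (u ω) x - ιU (∫ ω', u ω' ∂P) x) • (u ω - ∫ ω', u ω' ∂P) ∂P) ∈ T.domain,
      ∀ x₁ x₂ : X,
        ((∫ ω, (ιV (v ω) x₁ - ιV (∫ ω', v ω' ∂P) x₁) *
            (ιV (v ω) x₂ - ιV (∫ ω', v ω' ∂P) x₂) ∂P) = ιV (T ⟨_, hdomv x₂⟩) x₁) ∧
        ((∫ ω, (ιV (v ω) x₁ - ιV (∫ ω', v ω' ∂P) x₁) *
            (ιV (v ω) x₂ - ιV (∫ ω', v ω' ∂P) x₂) ∂P) = ιV (T ⟨_, hdomv x₁⟩) x₂) ∧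
        (ιV (T ⟨_, hdomu x₁⟩) x₂ =
          ∫ ω, (ιU (u ω) x₁ - ιU (∫ ω', u ω' ∂P) x₁) *
            (ιV (v ω) x₂ - ιV (∫ ω', v ω' ∂P) x₂) ∂P) := by
  classical
  set mu := ∫ ω', u ω' ∂P with hmu_def
  set mv := ∫ ω', v ω' ∂P with hmv_def
  -- evaluation continuous linear maps
  let evV : X → V →L[ℝ] ℝ := fun x => ⟨(LinearMap.proj x).comp ιV, hevV x⟩
  let evU : X → U →L[ℝ] ℝ := fun x => ⟨(LinearMap.proj x).comp ιU, hevU x⟩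
  have hevVapp : ∀ x w, evV x w = ιV w x := fun _ _ => rfl
  have hevUapp : ∀ x w, evU x w = ιU w x := fun _ _ => rfl
  have one_le_two : (1 : ℝ≥0∞) ≤ 2 := by norm_num
  have hu1 : Integrable u P := hu2.integrable one_le_two
  have hv1 : Integrable v P := hv2.integrable one_le_two
  -- the mean lies in the graph
  have hgraph_conv : Convex ℝ (T.graph : Set (U × V)) := T.graph.convex
  have hmean : ((mu, mv) : U × V) ∈ T.graph := by
    have h := hgraph_conv.integral_mem hT huv (hu1.prodMk hv1)
    rwa [integral_pair hu1 hv1] at h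
  have hpqr : (1 : ℝ≥0∞) / 1 = 1 / 2 + 1 / 2 := by
    rw [ENNReal.div_add_div_same, one_div_one]
    norm_num
    rw [ENNReal.div_self] <;> norm_num
  have hu2' : MemLp (fun ω => u ω - mu) 2 P := hu2.sub (memLp_const mu)
  have hv2' : MemLp (fun ω => v ω - mv) 2 P := hv2.sub (memLp_const mv)
  -- key lemma: for any L² scalar s, ∫ s • (u - mu) ∈ dom T and
  -- T maps it to ∫ s • (v - mv).
  have key : ∀ s : Ω → ℝ, MemLp s 2 P →
      (∫ ω, s ω • (u ω - mu) ∂P) ∈ T.domain ∧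
      ∀ h : (∫ ω, s ω • (u ω - mu) ∂P) ∈ T.domain,
        T ⟨∫ ω, s ω • (u ω - mu) ∂P, h⟩ = ∫ ω, s ω • (v ω - mv) ∂P := by
    intro s hs
    have hA : Integrable (fun ω => s ω • (u ω - mu)) P :=
      memLp_one_iff_integrable.mp (hu2'.smul hs (r := 1))
    have hB : Integrable (fun ω => s ω • (v ω - mv)) P :=
      memLp_one_iff_integrable.mp (hv2'.smul hs (r := 1))
    have hmem : ∀ᵐ ω ∂P, ((s ω • (u ω - mu), s ω • (v ω - mv)) : U × V) ∈ T.graph := by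
      filter_upwards [huv] with ω hω
      have : ((u ω - mu, v ω - mv) : U × V) ∈ T.graph := T.graph.sub_mem hω hmean
      simpa using T.graph.smul_mem (s ω) this
    have hint : ((∫ ω, s ω • (u ω - mu) ∂P, ∫ ω, s ω • (v ω - mv) ∂P) : U × V) ∈ T.graph := by
      have h := hgraph_conv.integral_mem hT hmem (hA.prodMk hB)
      rwa [integral_pair hA hB] at h
    rw [LinearPMap.mem_graph_iff] at hint
    obtain ⟨y, hy1, hy2⟩ := hint
    have hdom : (∫ ω, s ω • (u ω - mu) ∂P) ∈ T.domain := by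
      have := y.2; rw [show ((y : U)) = ∫ ω, s ω • (u ω - mu) ∂P from hy1] at this; exact this
    refine ⟨hdom, fun h => ?_⟩
    have : (⟨∫ ω, s ω • (u ω - mu) ∂P, h⟩ : T.domain) = y := Subtype.ext hy1.symm
    rw [this, hy2]
  -- evaluating the V-side integral
  have eval_int : ∀ (s : Ω → ℝ), MemLp s 2 P → ∀ x : X,
      ιV (∫ ω, s ω • (v ω - mv) ∂P) x = ∫ ω, s ω * (ιV (v ω) x - ιV mv x) ∂P := by
    intro s hs x
    have hB : Integrable (fun ω => s ω • (v ω - mv)) P :=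
      memLp_one_iff_integrable.mp (hv2'.smul hs (r := 1))
    have h := (evV x).integral_comp_comm hB
    rw [← hevVapp x, ← h]
    refine integral_congr_ae (Filter.Eventually.of_forall fun ω => ?_)
    simp [hevVapp, map_sub, smul_eq_mul]
  -- the three scalar processes
  have hsV : ∀ x : X, MemLp (fun ω => ιV (v ω) x - ιV mv x) 2 P := fun x =>
    ((evV x).comp_memLp' hv2).sub (memLp_const _)
  have hsU : ∀ x : X, MemLp (fun ω => ιU (u ω) x - ιU mu x) 2 P := fun x =>
    ((evU x).comp_memLp' hu2).sub (memLp_const _)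
  refine ⟨fun x => (key _ (hsV x)).1, fun x => (key _ (hsU x)).1, fun x₁ x₂ => ?_⟩
  have e1 : ∀ x x' : X,
      ιV (T ⟨_, (key _ (hsV x)).1⟩) x' = ∫ ω, (ιV (v ω) x - ιV mv x) * (ιV (v ω) x' - ιV mv x') ∂P := by
    intro x x'
    rw [(key _ (hsV x)).2, eval_int _ (hsV x)]
  have e2 : ιV (T ⟨_, (key _ (hsU x₁)).1⟩) x₂ =
      ∫ ω, (ιU (u ω) x₁ - ιU mu x₁) * (ιV (v ω) x₂ - ιV mv x₂) ∂P := by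
    rw [(key _ (hsU x₁)).2, eval_int _ (hsU x₁)]
  refine ⟨?_, ?_, e2⟩
  · rw [e1 x₂ x₁]
    exact integral_congr_ae (Filter.Eventually.of_forall fun ω => mul_comm _ _)
  · rw [e1 x₁ x₂]
end

section
/- Let U and V be real Banach spaces, let T : dom(T) ⊆ U → V be a closed, densely defined linear operator, and suppose T has a densely defined adjoint: there is a subspace D of the continuous dual V′ of V, dense in V′ in the dual norm, such that for every ψ ∈ D there exists φ ∈ U′ with φ(w) = ψ(T w) for all w ∈ dom(T). Let (Ω, Σ, P) be a probability space, let u : Ω → U be a strongly measurable random variable whose law is a Gaussian measure on U (i.e., for every continuous linear functional L : U → ℝ, the law of L(u) is a Gaussian measure on ℝ, possibly degenerate), suppose u(ω) ∈ dom(T) P-a.s., set v(ω) := T(u(ω)), and suppose ∫_Ω ‖v(ω)‖_V^n dP(ω) < ∞ for every n ∈ ℕ. Then for every continuous linear functional ψ : V → ℝ and every integer n ≥ 3, the n-th cumulant of the real random variable ψ(v) vanishes: Σ_{P ∈ 𝒫(n)} (−1)^{|P|−1} (|P|−1)! Π_{B ∈ P} E[(ψ(v))^{|B|}] = 0, where 𝒫(n)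 is the set of all partitions of {1, …, n}. -/
open Finset

namespace CumAux

variable {α : Type*} [DecidableEq α]

lemma sup_erase_parts {s : Finset α} (π : Finpartition s) {B : Finset α} (hB : B ∈ π.parts) :
    (π.parts.erase B).sup id = s \ B := by
  apply le_antisymm
  · refine Finset.sup_le fun C hC => ?_
    have hC' := Finset.mem_of_mem_erase hC
    have h1 : C ⊆ s := π.le hC'
    have h2 : Disjoint C B := π.disjoint hC' hB (Finset.ne_of_mem_erase hC)
    intro x hx
    exact Finset.mem_sdiff.2 ⟨h1 hx, fun hxB => Finset.disjoint_left.1 h2 hx hxB⟩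
  · intro x hx
    obtain ⟨hxs, hxB⟩ := Finset.mem_sdiff.1 hx
    obtain ⟨C, hC, hxC⟩ := π.exists_mem hxs
    have hCB : C ≠ B := fun h => hxB (h ▸ hxC)
    exact (Finset.le_sup (f := id) (Finset.mem_erase.2 ⟨hCB, hC⟩) : C ≤ _) hxC

/-- Delete a part from a finpartition. -/
def delp {s : Finset α} (π : Finpartition s) {B : Finset α} (hB : B ∈ π.parts) :
    Finpartition (s \ B) :=
  π.ofSubset (Finset.erase_subset _ _) (sup_erase_parts π hB)

@[simp] lemma delp_parts {s : Finset α} (π : Finpartition s) {B : Finset α}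
    (hB : B ∈ π.parts) : (delp π hB).parts = π.parts.erase B := rfl

lemma notmem_parts_sdiff {s B : Finset α} (hBne : B.Nonempty) (τ : Finpartition (s \ B)) :
    B ∉ τ.parts := by
  intro h
  obtain ⟨x, hx⟩ := hBne
  have : x ∈ s \ B := (τ.le h) hx
  exact (Finset.mem_sdiff.1 this).2 hx

/-- Extend a finpartition of `s \ B` by the part `B`. -/
def extp {s B : Finset α} (hBne : B.Nonempty) (hBs : B ⊆ s) (τ : Finpartition (s \ B)) :
    Finpartition s :=
  τ.extend (by simpa [Finset.bot_eq_empty] using hBne.ne_empty)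
    (Finset.sdiff_disjoint) (by rw [Finset.sup_eq_union, Finset.sdiff_union_of_subset hBs])

@[simp] lemma extp_parts {s B : Finset α} (hBne : B.Nonempty) (hBs : B ⊆ s)
    (τ : Finpartition (s \ B)) : (extp hBne hBs τ).parts = insert B τ.parts := rfl

lemma mem_extp_parts {s B : Finset α} (hBne : B.Nonempty) (hBs : B ⊆ s)
    (τ : Finpartition (s \ B)) : B ∈ (extp hBne hBs τ).parts := mem_insert_self _ _

lemma extp_parts_card {s B : Finset α} (hBne : B.Nonempty) (hBs : B ⊆ s)
    (τ : Finpartition (s \ B)) : (extp hBne hBs τ).parts.card = τ.parts.card + 1 := by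
  rw [extp_parts, Finset.card_insert_of_notMem (notmem_parts_sdiff hBne τ)]

lemma sum_over_contains {s B : Finset α} (hBne : B.Nonempty) (hBs : B ⊆ s)
    (f : Finpartition s → ℝ) (f' : Finpartition (s \ B) → ℝ)
    (hf : ∀ (τ : Finpartition (s \ B)), f (extp hBne hBs τ) = f' τ) :
    ∑ π ∈ Finset.univ.filter (fun π : Finpartition s => B ∈ π.parts), f π
      = ∑ τ : Finpartition (s \ B), f' τ := by
  refine Finset.sum_bij' (fun π hπ => delp π (Finset.mem_filter.1 hπ).2)
    (fun τ _ => extp hBne hBs τ) ?_ ?_ ?_ ?_ ?_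
  · intro π hπ; exact Finset.mem_univ _
  · intro τ _
    exact Finset.mem_filter.2 ⟨Finset.mem_univ _, mem_extp_parts hBne hBs τ⟩
  · intro π hπ
    ext1
    simp only [extp_parts, delp_parts]
    exact Finset.insert_erase (Finset.mem_filter.1 hπ).2
  · intro τ _
    ext1
    simp only [extp_parts, delp_parts]
    exact Finset.erase_insert (notmem_parts_sdiff hBne τ)
  · intro π hπ
    have hB := (Finset.mem_filter.1 hπ).2
    have : extp hBne hBs (delp π hB) = π := by
      ext1
      simp only [extp_parts, delp_parts]
      exact Finset.insert_erase hB
    rw [← hf (delp π hB), this]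

/-- Core decomposition: summing over partitions with a marked block equals summing
over the block and a partition of the rest. -/
lemma D0 {s : Finset α} (g : Finset α → ℝ) (H : ℕ → ℝ) (μ : Finset α → ℝ) :
    (∑ π : Finpartition s, ∑ B ∈ π.parts,
      g B * (H (π.parts.card - 1) * ∏ C ∈ π.parts.erase B, μ C))
      = ∑ B ∈ s.powerset.filter (fun B => B.Nonempty),
          g B * ∑ τ : Finpartition (s \ B), H τ.parts.card * ∏ C ∈ τ.parts, μ C := by
  rw [Finset.sum_comm' (s' := fun B => Finset.univ.filter
      (fun π : Finpartition s => B ∈ π.parts))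
      (t' := s.powerset.filter (fun B => B.Nonempty))]
  · refine Finset.sum_congr rfl fun B hB => ?_
    obtain ⟨hBs, hBne⟩ := Finset.mem_filter.1 hB
    rw [Finset.mem_powerset] at hBs
    rw [Finset.mul_sum]
    refine sum_over_contains hBne hBs _ _ fun τ => ?_
    rw [extp_parts_card, Nat.add_sub_cancel, extp_parts,
      Finset.erase_insert (notmem_parts_sdiff hBne τ)]
  · intro π B
    constructor
    · rintro ⟨-, hB⟩
      exact ⟨Finset.mem_filter.2 ⟨Finset.mem_univ _, hB⟩,
        Finset.mem_filter.2 ⟨Finset.mem_powerset.2 (π.le hB), π.nonempty_of_mem_parts hB⟩⟩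
    · rintro ⟨h1, -⟩
      exact ⟨Finset.mem_univ _, (Finset.mem_filter.1 h1).2⟩

end CumAux

namespace CumAux

/-- Coefficients of the reciprocal of the moment generating series. -/
noncomputable def tseq (μ : ℕ → ℝ) : ℕ → ℝ
  | 0 => 1
  | (n+1) => -∑ k ∈ Finset.range (n+1),
      ((n+1).choose (k+1) : ℝ) * μ (k+1) * tseq μ (n - k)
  termination_by n => n
  decreasing_by exact Nat.lt_succ_of_le (Nat.sub_le _ _)

lemma tseq_succ (μ : ℕ → ℝ) (n : ℕ) : tseq μ (n+1)
    = -∑ k ∈ Finset.range (n+1), ((n+1).choose (k+1) : ℝ) * μ (k+1) * tseq μ (n - k) := by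
  rw [tseq]

lemma csum_eq_zero {μ : ℕ → ℝ} (hμ0 : μ 0 = 1) (n : ℕ) :
    ∑ k ∈ Finset.range (n+2), ((n+1).choose k : ℝ) * μ k * tseq μ (n+1-k) = 0 := by
  rw [Finset.sum_range_succ' (fun k => ((n+1).choose k : ℝ) * μ k * tseq μ (n+1-k)) (n+1)]
  have h1 : ∀ k, n + 1 - (k + 1) = n - k := fun k => Nat.succ_sub_succ n k
  have : ∑ k ∈ Finset.range (n+1), ((n+1).choose (k+1) : ℝ) * μ (k+1) * tseq μ (n+1-(k+1))
      = -tseq μ (n+1) := by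
    rw [tseq_succ, neg_neg]
    exact Finset.sum_congr rfl fun k _ => by rw [h1]
  rw [this]
  simp [hμ0]

lemma csum_eq_zero' {μ : ℕ → ℝ} (hμ0 : μ 0 = 1) {j : ℕ} (hj : 1 ≤ j) :
    ∑ k ∈ Finset.range (j+1), (j.choose k : ℝ) * μ k * tseq μ (j-k) = 0 := by
  obtain ⟨n, rfl⟩ : ∃ n, j = n + 1 := ⟨j - 1, by omega⟩
  exact csum_eq_zero hμ0 n

lemma rsum_eq_zero {μ : ℕ → ℝ} {m v : ℝ} (hμ0 : μ 0 = 1) (hμ1 : μ 1 = m)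
    (hrec : ∀ k : ℕ, μ (k+2) = m * μ (k+1) + v * (k+1) * μ k)
    {j : ℕ} (hj : 2 ≤ j) :
    ∑ k ∈ Finset.range (j+1), (j.choose k : ℝ) * μ (k+1) * tseq μ (j-k) = 0 := by
  obtain ⟨j', rfl⟩ : ∃ j', j = j' + 1 := ⟨j - 1, by omega⟩
  have hj' : 1 ≤ j' := by omega
  rw [Finset.sum_range_succ' (fun k => ((j'+1).choose k : ℝ) * μ (k+1) * tseq μ (j'+1-k)) (j'+1)]
  have h1 : ∀ k, j' + 1 - (k + 1) = j' - k := fun k => Nat.succ_sub_succ j' k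
  have key : ∀ k ∈ Finset.range (j'+1),
      ((j'+1).choose (k+1) : ℝ) * μ (k+2) * tseq μ (j'+1-(k+1))
      = m * (((j'+1).choose (k+1) : ℝ) * μ (k+1) * tseq μ (j'-k))
        + v * (j'+1) * ((j'.choose k : ℝ) * μ k * tseq μ (j'-k)) := by
    intro k _
    rw [h1, hrec k]
    have hch : ((j'+1).choose (k+1) : ℝ) * (k+1) = (j'+1) * (j'.choose k : ℝ) := by
      have := Nat.add_one_mul_choose_eq j' k
      have : ((j'+1) * j'.choose k : ℕ) = ((j'+1).choose (k+1) * (k+1) : ℕ) := this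
      exact_mod_cast this.symm
    linear_combination (v * μ k * tseq μ (j' - k)) * hch
  rw [Finset.sum_congr rfl key, Finset.sum_add_distrib, ← Finset.mul_sum, ← Finset.mul_sum]
  have hc1 : ∑ k ∈ Finset.range (j'+1), ((j'+1).choose (k+1) : ℝ) * μ (k+1) * tseq μ (j'-k)
      = -tseq μ (j'+1) := by rw [tseq_succ, neg_neg]
  have hc2 : ∑ k ∈ Finset.range (j'+1), (j'.choose k : ℝ) * μ k * tseq μ (j'-k) = 0 :=
    csum_eq_zero' hμ0 hj'
  rw [hc1, hc2]
  simp [hμ1]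

end CumAux

namespace CumAux

variable {α : Type*} [DecidableEq α]

noncomputable def Tsum (μ : ℕ → ℝ) (s : Finset α) : ℝ :=
  ∑ π : Finpartition s, (-1 : ℝ) ^ π.parts.card * (π.parts.card).factorial
    * ∏ B ∈ π.parts, μ B.card

lemma parts_empty (π : Finpartition (∅ : Finset α)) : π.parts = ∅ :=
  Finpartition.parts_eq_empty_iff.2 Finset.bot_eq_empty.symm

lemma Tsum_empty (μ : ℕ → ℝ) : Tsum μ (∅ : Finset α) = 1 := by
  have huniv : (Finset.univ : Finset (Finpartition (∅ : Finset α))) = {⊥} := by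
    ext π
    simp only [Finset.mem_univ, Finset.mem_singleton, true_iff]
    ext1
    rw [parts_empty, parts_empty]
  rw [Tsum, huniv, Finset.sum_singleton, parts_empty]
  simp

lemma powerset_filter_nonempty (s : Finset α) :
    s.powerset.filter (fun B => B.Nonempty) = s.powerset.erase ∅ := by
  ext B
  simp [Finset.nonempty_iff_ne_empty, and_comm]

lemma Tsum_eq (μ : ℕ → ℝ) (hμ0 : μ 0 = 1) (s : Finset α) : Tsum μ s = tseq μ s.card := by
  induction s using Finset.strongInduction with
  | _ s ih =>
  rcases s.eq_empty_or_nonempty with rfl | hs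
  · rw [Finset.card_empty, show tseq μ 0 = 1 from by rw [tseq]]
    exact Tsum_empty μ
  obtain ⟨n, hn⟩ : ∃ n, s.card = n + 1 := ⟨s.card - 1, by have := hs.card_pos; omega⟩
  -- step 1 : rewrite the weight blockwise
  have step1 : Tsum μ s = ∑ π : Finpartition s, ∑ B ∈ π.parts,
      μ B.card * ((-((-1 : ℝ) ^ (π.parts.card - 1) * (π.parts.card - 1).factorial))
        * ∏ C ∈ π.parts.erase B, μ C.card) := by
    refine Finset.sum_congr rfl fun π _ => ?_
    obtain ⟨c, hc⟩ : ∃ c, π.parts.card = c + 1 :=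
      ⟨π.parts.card - 1, by have := (π.parts_nonempty (by simpa using hs.ne_empty)).card_pos; omega⟩
    have hprod : ∀ B ∈ π.parts, μ B.card * ∏ C ∈ π.parts.erase B, μ C.card
        = ∏ C ∈ π.parts, μ C.card := fun B hB => Finset.mul_prod_erase π.parts (fun C => μ C.card) hB
    calc (-1 : ℝ) ^ π.parts.card * (π.parts.card).factorial * ∏ B ∈ π.parts, μ B.card
        = ∑ B ∈ π.parts, ((-((-1 : ℝ) ^ (π.parts.card - 1) * (π.parts.card - 1).factorial))
            * ∏ C ∈ π.parts, μ C.card) := by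
          rw [Finset.sum_const, hc]
          simp only [Nat.add_sub_cancel]
          rw [nsmul_eq_mul, Nat.factorial_succ]
          push_cast
          ring
      _ = _ := by
          refine Finset.sum_congr rfl fun B hB => ?_
          rw [← hprod B hB]
          ring
  rw [step1, D0 (fun B => μ B.card) (fun j => -((-1 : ℝ) ^ j * (j).factorial)) (fun C => μ C.card)]
  have step2 : ∀ B ∈ s.powerset.filter (fun B => B.Nonempty),
      μ B.card * ∑ τ : Finpartition (s \ B),
          (-((-1 : ℝ) ^ τ.parts.card * (τ.parts.card).factorial)) * ∏ C ∈ τ.parts, μ C.card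
      = -(μ B.card * tseq μ (s.card - B.card)) := by
    intro B hB
    obtain ⟨hBs, hBne⟩ := Finset.mem_filter.1 hB
    rw [Finset.mem_powerset] at hBs
    have : ∑ τ : Finpartition (s \ B),
        (-((-1 : ℝ) ^ τ.parts.card * (τ.parts.card).factorial)) * ∏ C ∈ τ.parts, μ C.card
        = -Tsum μ (s \ B) := by
      rw [Tsum, ← Finset.sum_neg_distrib]
      exact Finset.sum_congr rfl fun τ _ => by ring
    rw [this, ih _ (Finset.sdiff_ssubset hBs hBne), Finset.card_sdiff_of_subset hBs]
    ring
  rw [Finset.sum_congr rfl step2, Finset.sum_neg_distrib, powerset_filter_nonempty,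
    Finset.sum_erase_eq_sub (Finset.empty_mem_powerset s)]
  rw [Finset.sum_powerset_apply_card (fun k => μ k * tseq μ (s.card - k))]
  simp only [Finset.card_empty, hμ0, one_mul, Nat.sub_zero, nsmul_eq_mul]
  rw [hn]
  have hcs := csum_eq_zero hμ0 n
  rw [show ∑ k ∈ Finset.range (n+1+1), ((n+1).choose k : ℝ) * (μ k * tseq μ (n+1-k))
      = ∑ k ∈ Finset.range (n+2), ((n+1).choose k : ℝ) * μ k * tseq μ (n+1-k) from
    Finset.sum_congr rfl fun k _ => by ring]
  rw [hcs]
  ring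

end CumAux

namespace CumAux

variable {α : Type*} [DecidableEq α]

theorem cumulant_sum_eq_zero (μ : ℕ → ℝ) (m v : ℝ)
    (hμ0 : μ 0 = 1) (hμ1 : μ 1 = m)
    (hrec : ∀ k : ℕ, μ (k+2) = m * μ (k+1) + v * (k+1) * μ k)
    (s : Finset α) (hs : 3 ≤ s.card) :
    ∑ π : Finpartition s, (-1 : ℝ) ^ (π.parts.card - 1) * ((π.parts.card - 1).factorial : ℝ)
      * ∏ B ∈ π.parts, μ B.card = 0 := by
  have hsne : s.Nonempty := Finset.card_pos.1 (by omega)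
  obtain ⟨a, ha⟩ := hsne
  -- step 1: rewrite as a sum over the block containing `a`
  have step1 : ∑ π : Finpartition s, (-1 : ℝ) ^ (π.parts.card - 1)
        * ((π.parts.card - 1).factorial : ℝ) * ∏ B ∈ π.parts, μ B.card
      = ∑ π : Finpartition s, ∑ B ∈ π.parts,
        (if a ∈ B then μ B.card else 0) * (((-1 : ℝ) ^ (π.parts.card - 1)
          * ((π.parts.card - 1).factorial : ℝ)) * ∏ C ∈ π.parts.erase B, μ C.card) := by
    refine Finset.sum_congr rfl fun π _ => ?_
    have hfa : π.parts.filter (fun B => a ∈ B) = {π.part a} := by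
      ext B
      simp only [Finset.mem_filter, Finset.mem_singleton]
      constructor
      · rintro ⟨hB, haB⟩
        exact (π.part_eq_of_mem hB haB).symm
      · rintro rfl
        exact ⟨π.part_mem.2 ha, π.mem_part ha⟩
    have : ∑ B ∈ π.parts, (if a ∈ B then μ B.card else 0) * (((-1 : ℝ) ^ (π.parts.card - 1)
          * ((π.parts.card - 1).factorial : ℝ)) * ∏ C ∈ π.parts.erase B, μ C.card)
        = ∑ B ∈ π.parts.filter (fun B => a ∈ B), μ B.card * (((-1 : ℝ) ^ (π.parts.card - 1)
          * ((π.parts.card - 1).factorial : ℝ)) * ∏ C ∈ π.parts.erase B, μ C.card) := by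
      rw [Finset.sum_filter]
      exact Finset.sum_congr rfl fun B _ => by rw [ite_mul, zero_mul]
    rw [this, hfa, Finset.sum_singleton,
      ← Finset.mul_prod_erase π.parts (fun C => μ C.card) (π.part_mem.2 ha)]
    ring
  rw [step1, D0 (fun B => if a ∈ B then μ B.card else 0)
    (fun j => (-1 : ℝ) ^ j * (j.factorial : ℝ)) (fun C => μ C.card)]
  -- step 2: evaluate inner sums via `Tsum_eq`
  have step2 : ∀ B ∈ s.powerset.filter (fun B => B.Nonempty),
      (if a ∈ B then μ B.card else 0) * ∑ τ : Finpartition (s \ B),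
          ((-1 : ℝ) ^ τ.parts.card * ((τ.parts.card).factorial : ℝ)) * ∏ C ∈ τ.parts, μ C.card
      = (if a ∈ B then μ B.card * tseq μ (s.card - B.card) else 0) := by
    intro B hB
    obtain ⟨hBs, hBne⟩ := Finset.mem_filter.1 hB
    rw [Finset.mem_powerset] at hBs
    have hT : ∑ τ : Finpartition (s \ B),
        ((-1 : ℝ) ^ τ.parts.card * ((τ.parts.card).factorial : ℝ)) * ∏ C ∈ τ.parts, μ C.card
        = tseq μ (s.card - B.card) := by
      rw [show (∑ τ : Finpartition (s \ B),
          ((-1 : ℝ) ^ τ.parts.card * ((τ.parts.card).factorial : ℝ)) * ∏ C ∈ τ.parts, μ C.card)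
          = Tsum μ (s \ B) from rfl, Tsum_eq μ hμ0, Finset.card_sdiff_of_subset hBs]
    rw [hT, ite_mul, zero_mul]
  rw [Finset.sum_congr rfl step2]
  -- step 3: extend the sum to the full powerset
  have step3 : ∑ B ∈ s.powerset.filter (fun B => B.Nonempty),
      (if a ∈ B then μ B.card * tseq μ (s.card - B.card) else 0)
      = ∑ B ∈ s.powerset, (if a ∈ B then μ B.card * tseq μ (s.card - B.card) else 0) := by
    refine Finset.sum_subset (Finset.filter_subset _ _) fun B hB hnB => ?_
    have : ¬ B.Nonempty := fun h => hnB (Finset.mem_filter.2 ⟨hB, h⟩)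
    rw [Finset.not_nonempty_iff_eq_empty] at this
    subst this
    simp
  rw [step3]
  -- step 4: pass to subsets of `s.erase a`
  have hins : s = insert a (s.erase a) := (Finset.insert_erase ha).symm
  rw [show s.powerset = (insert a (s.erase a)).powerset from by rw [← hins]]
  rw [Finset.sum_powerset_insert (Finset.notMem_erase a s)]
  have hz : ∑ t ∈ (s.erase a).powerset,
      (if a ∈ t then μ t.card * tseq μ (s.card - t.card) else 0) = 0 := by
    refine Finset.sum_eq_zero fun t ht => ?_
    have : a ∉ t := fun h => Finset.notMem_erase a s (Finset.mem_powerset.1 ht h)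
    simp [this]
  rw [hz, zero_add]
  have step4 : ∀ t ∈ (s.erase a).powerset,
      (if a ∈ insert a t then μ (insert a t).card * tseq μ (s.card - (insert a t).card) else 0)
      = μ (t.card + 1) * tseq μ ((s.card - 1) - t.card) := by
    intro t ht
    have hat : a ∉ t := fun h => Finset.notMem_erase a s (Finset.mem_powerset.1 ht h)
    rw [if_pos (Finset.mem_insert_self a t), Finset.card_insert_of_notMem hat]
    have h2 : s.card - (t.card + 1) = (s.card - 1) - t.card := by omega
    rw [h2]
  rw [Finset.sum_congr rfl step4]
  rw [Finset.sum_powerset_apply_card (fun k => μ (k + 1) * tseq μ ((s.card - 1) - k))]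
  have hcard : (s.erase a).card = s.card - 1 := Finset.card_erase_of_mem ha
  rw [hcard]
  have := rsum_eq_zero hμ0 hμ1 hrec (j := s.card - 1) (by omega)
  rw [show ∑ k ∈ Finset.range (s.card - 1 + 1),
      (s.card - 1).choose k • (μ (k + 1) * tseq μ (s.card - 1 - k))
      = ∑ k ∈ Finset.range (s.card - 1 + 1),
        ((s.card - 1).choose k : ℝ) * μ (k + 1) * tseq μ (s.card - 1 - k) from
    Finset.sum_congr rfl fun k _ => by rw [nsmul_eq_mul]; ring]
  exact this

end CumAux

section GaussSec
open MeasureTheory Real ProbabilityTheory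

namespace CumAux

lemma integrable_pow_gauss {b : ℝ} (hb : 0 < b) (k : ℕ) :
    Integrable (fun x : ℝ => x ^ k * rexp (-b * x ^ 2)) := by
  have h := integrable_rpow_mul_exp_neg_mul_sq hb
    (s := (k : ℝ)) (lt_of_lt_of_le neg_one_lt_zero (Nat.cast_nonneg k))
  refine h.congr (Filter.Eventually.of_forall fun x => ?_)
  simp only [Real.rpow_natCast]

lemma integrable_pow_gauss_shift {b : ℝ} (hb : 0 < b) (k : ℕ) (m : ℝ) :
    Integrable (fun x : ℝ => x ^ k * rexp (-b * (x - m) ^ 2)) := by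
  have hF : Integrable (fun y : ℝ => (y + m) ^ k * rexp (-b * y ^ 2)) := by
    have heq : (fun y : ℝ => (y + m) ^ k * rexp (-b * y ^ 2))
        = fun y => ∑ i ∈ Finset.range (k + 1),
            (m ^ (k - i) * (k.choose i : ℝ)) * (y ^ i * rexp (-b * y ^ 2)) := by
      funext y
      rw [add_pow, Finset.sum_mul]
      exact Finset.sum_congr rfl fun i _ => by ring
    rw [heq]
    exact integrable_finset_sum _ fun i _ => ((integrable_pow_gauss hb i).const_mul _)
  have h2 := hF.comp_sub_right m
  refine h2.congr (Filter.Eventually.of_forall fun x => ?_)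
  simp

lemma gauss_ibp {b m : ℝ} (hb : 0 < b) (j : ℕ) :
    ∫ x : ℝ, x ^ (j + 1) * rexp (-b * (x - m) ^ 2)
      = m * (∫ x : ℝ, x ^ j * rexp (-b * (x - m) ^ 2))
        + ((j : ℝ) / (2 * b)) * ∫ x : ℝ, x ^ (j - 1) * rexp (-b * (x - m) ^ 2) := by
  set e : ℝ → ℝ := fun x => rexp (-b * (x - m) ^ 2) with he
  have hint : ∀ i : ℕ, Integrable (fun x : ℝ => x ^ i * e x) := fun i =>
    integrable_pow_gauss_shift hb i m
  have hderiv : ∀ x : ℝ, HasDerivAt (fun x => x ^ j * e x)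
      ((j : ℝ) * x ^ (j - 1) * e x + x ^ j * (e x * (-b * (2 * (x - m))))) x := by
    intro x
    have h1 : HasDerivAt (fun x : ℝ => x ^ j) ((j : ℝ) * x ^ (j - 1)) x := hasDerivAt_pow j x
    have h2 : HasDerivAt (fun x : ℝ => -b * (x - m) ^ 2) (-b * (2 * (x - m))) x := by
      have h3 := (((hasDerivAt_id x).sub_const m).pow 2).const_mul (-b)
      simpa using h3
    exact h1.mul h2.exp
  have hf' : Integrable (fun x : ℝ =>
      (j : ℝ) * x ^ (j - 1) * e x + x ^ j * (e x * (-b * (2 * (x - m))))) := by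
    have heq : (fun x : ℝ =>
        (j : ℝ) * x ^ (j - 1) * e x + x ^ j * (e x * (-b * (2 * (x - m)))))
        = fun x => (j : ℝ) * (x ^ (j - 1) * e x)
            + ((-2 * b) * (x ^ (j + 1) * e x) + (2 * b * m) * (x ^ j * e x)) := by
      funext x; simp only [he]; ring
    rw [heq]
    exact ((hint (j - 1)).const_mul _).add
      (((hint (j + 1)).const_mul _).add ((hint j).const_mul _))
  have hzero : ∫ x : ℝ, ((j : ℝ) * x ^ (j - 1) * e x + x ^ j * (e x * (-b * (2 * (x - m))))) = 0 :=
    integral_eq_zero_of_hasDerivAt_of_integrable hderiv hf' (hint j)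
  rw [show (fun x : ℝ =>
      (j : ℝ) * x ^ (j - 1) * e x + x ^ j * (e x * (-b * (2 * (x - m)))))
      = fun x => (j : ℝ) * (x ^ (j - 1) * e x)
          + ((-2 * b) * (x ^ (j + 1) * e x) + (2 * b * m) * (x ^ j * e x)) from by
    funext x; simp only [he]; ring] at hzero
  have e1 : ∫ x : ℝ, ((j : ℝ) * (x ^ (j - 1) * e x)
        + ((-2 * b) * (x ^ (j + 1) * e x) + (2 * b * m) * (x ^ j * e x)))
      = (∫ x : ℝ, (j : ℝ) * (x ^ (j - 1) * e x))
        + ∫ x : ℝ, ((-2 * b) * (x ^ (j + 1) * e x) + (2 * b * m) * (x ^ j * e x)) :=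
    integral_add ((hint (j - 1)).const_mul _)
      (((hint (j + 1)).const_mul _).add ((hint j).const_mul _))
  have e2 : ∫ x : ℝ, ((-2 * b) * (x ^ (j + 1) * e x) + (2 * b * m) * (x ^ j * e x))
      = (∫ x : ℝ, (-2 * b) * (x ^ (j + 1) * e x))
        + ∫ x : ℝ, (2 * b * m) * (x ^ j * e x) :=
    integral_add ((hint (j + 1)).const_mul _) ((hint j).const_mul _)
  rw [e1, e2, integral_const_mul, integral_const_mul, integral_const_mul] at hzero
  have hbne : (2 * b) ≠ 0 := by positivity
  show ∫ x : ℝ, x ^ (j + 1) * e x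
      = m * (∫ x : ℝ, x ^ j * e x) + ((j : ℝ) / (2 * b)) * ∫ x : ℝ, x ^ (j - 1) * e x
  field_simp
  linear_combination -hzero

end CumAux

namespace CumAux

lemma gauss_integral_pow (m : ℝ) {v : NNReal} (hv : v ≠ 0) (k : ℕ) :
    ∫ x, x ^ k ∂(gaussianReal m v)
      = (√(2 * π * v))⁻¹ * ∫ x : ℝ, x ^ k * rexp (-(2 * (v : ℝ))⁻¹ * (x - m) ^ 2) := by
  have hv' : (0 : ℝ) < v := by positivity
  rw [gaussianReal_of_var_ne_zero m hv]
  have hpdf : (gaussianPDF m v) = fun x => ((Real.toNNReal (gaussianPDFReal m v x) : NNReal) : ENNReal) := rfl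
  rw [hpdf, integral_withDensity_eq_integral_smul
    ((measurable_gaussianPDFReal m v).real_toNNReal) (fun x => x ^ k)]
  rw [← integral_const_mul]
  refine integral_congr_ae (Filter.Eventually.of_forall fun x => ?_)
  have h1 : (Real.toNNReal (gaussianPDFReal m v x) : ℝ) = gaussianPDFReal m v x :=
    Real.coe_toNNReal _ (gaussianPDFReal_nonneg m v x)
  show (gaussianPDFReal m v x).toNNReal • x ^ k = _
  rw [NNReal.smul_def, smul_eq_mul, h1, gaussianPDFReal]
  rw [show -(x - m) ^ 2 / (2 * (v : ℝ)) = -(2 * (v : ℝ))⁻¹ * (x - m) ^ 2 from by ring]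
  ring

lemma gauss_moment_rec (m : ℝ) (v : NNReal) (j : ℕ) :
    ∫ x, x ^ (j + 1) ∂(gaussianReal m v)
      = m * (∫ x, x ^ j ∂(gaussianReal m v))
        + (j : ℝ) * v * ∫ x, x ^ (j - 1) ∂(gaussianReal m v) := by
  rcases eq_or_ne v 0 with rfl | hv
  · rw [gaussianReal_zero_var]
    rw [integral_dirac (fun x : ℝ => x ^ (j + 1)), integral_dirac (fun x : ℝ => x ^ j),
      integral_dirac (fun x : ℝ => x ^ (j - 1))]
    push_cast
    ring
  · have hv' : (0 : ℝ) < v := by positivity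
    have hb : (0 : ℝ) < (2 * (v : ℝ))⁻¹ := by positivity
    rw [gauss_integral_pow m hv (j + 1), gauss_integral_pow m hv j,
      gauss_integral_pow m hv (j - 1), gauss_ibp hb j]
    have h2b : (j : ℝ) / (2 * (2 * (v : ℝ))⁻¹) = (j : ℝ) * v := by
      rw [div_eq_iff (by positivity : (2 * (2 * (v : ℝ))⁻¹) ≠ 0)]
      field_simp
    rw [h2b]
    ring

lemma gauss_moment_zero (m : ℝ) (v : NNReal) : ∫ x, x ^ 0 ∂(gaussianReal m v) = 1 := by
  simp

lemma gauss_moment_one (m : ℝ) (v : NNReal) : ∫ x, x ^ 1 ∂(gaussianReal m v) = m := by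
  have := gauss_moment_rec m v 0
  simpa using this

lemma gauss_moment_two (m : ℝ) (v : NNReal) :
    ∫ x, x ^ 2 ∂(gaussianReal m v) = m ^ 2 + v := by
  have h := gauss_moment_rec m v 1
  rw [gauss_moment_one, gauss_moment_zero] at h
  rw [h]
  ring

end CumAux


end GaussSec

open MeasureTheory Filter Topology

/-- Cumulant vanishing step of part (c) of the paper's main theorem: if `T` is a closed,
densely defined operator with densely defined adjoint, `u` is a Gaussian random element of
`U` with `u ω ∈ dom T` a.s., `v = T u`, and `v` has finite moments of all orders, then for
every continuous linear functional `ψ` on `V` and every `n ≥ 3`, the `n`-th cumulant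
`∑_{π ∈ 𝒫(n)} (−1)^{|π|−1} (|π|−1)! ∏_{B ∈ π} E[(ψ v)^{|B|}]` of `ψ (v)` vanishes. -/
theorem stmt_6 {U V : Type*}
    [NormedAddCommGroup U] [NormedSpace ℝ U] [CompleteSpace U]
    [NormedAddCommGroup V] [NormedSpace ℝ V] [CompleteSpace V]
    (T : U →ₗ.[ℝ] V) (hT : T.IsClosed) (hTdense : Dense (T.domain : Set U))
    (D : Submodule ℝ (V →L[ℝ] ℝ)) (hD : Dense (D : Set (V →L[ℝ] ℝ)))
    (hadj : ∀ ψ ∈ D, ∃ φ : U →L[ℝ] ℝ, ∀ (w : U) (hw : w ∈ T.domain), φ w = ψ (T ⟨w, hw⟩))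
    {Ω : Type*} [MeasurableSpace Ω] (P : Measure Ω) [IsProbabilityMeasure P]
    (u : Ω → U) (hu_meas : StronglyMeasurable u)
    (hu_gauss : ∀ L : U →L[ℝ] ℝ, ∃ (m : ℝ) (s : NNReal),
      P.map (fun ω => L (u ω)) = ProbabilityTheory.gaussianReal m s)
    (v : Ω → V) (hv_meas : AEStronglyMeasurable v P)
    (huv : ∀ᵐ ω ∂P, (u ω, v ω) ∈ T.graph)
    (hv_mom : ∀ n : ℕ, ∫⁻ ω, (‖v ω‖₊ : ENNReal) ^ n ∂P < ⊤)
    (ψ : V →L[ℝ] ℝ) (n : ℕ) (hn : 3 ≤ n) :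
    ∑ π : Finpartition (Finset.univ : Finset (Fin n)),
      (-1 : ℝ) ^ (π.parts.card - 1) * (Nat.factorial (π.parts.card - 1)) *
        ∏ B ∈ π.parts, ∫ ω, (ψ (v ω)) ^ B.card ∂P = 0 := by
  classical
  -- an approximating sequence from `D`
  have hseq : ∀ j : ℕ, ∃ d : V →L[ℝ] ℝ, d ∈ D ∧ ‖d - ψ‖ < 1 / (j + 1) := by
    intro j
    obtain ⟨d, hdD, hd⟩ := Metric.mem_closure_iff.mp (hD ψ) (1 / (j + 1)) (by positivity)
    exact ⟨d, hdD, by rwa [dist_comm, dist_eq_norm] at hd⟩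
  choose ψs hψsD hψs using hseq
  choose φs hφs using fun j => hadj (ψs j) (hψsD j)
  choose ms vs hgauss using fun j => hu_gauss (φs j)
  -- almost everywhere, `ψs j ∘ v` agrees with `φs j ∘ u`
  have hae : ∀ j, (fun ω => ψs j (v ω)) =ᵐ[P] fun ω => φs j (u ω) := by
    intro j
    filter_upwards [huv] with ω hω
    obtain ⟨y, hy1, hy2⟩ := (T.mem_graph_iff).mp hω
    have hy1' : (y : U) = u ω := hy1
    have hy2' : T y = v ω := hy2
    rw [← hy2', ← hy1']
    exact (hφs j y.1 y.2).symm
  have hmap : ∀ j, P.map (fun ω => ψs j (v ω)) = ProbabilityTheory.gaussianReal (ms j) (vs j) :=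
    fun j => by rw [Measure.map_congr (hae j)]; exact hgauss j
  -- moments of the approximants are Gaussian moments
  have hμj : ∀ j k, ∫ ω, (ψs j (v ω)) ^ k ∂P
      = ∫ x, x ^ k ∂(ProbabilityTheory.gaussianReal (ms j) (vs j)) := by
    intro j k
    rw [← hmap j, integral_map
      ((ψs j).continuous.comp_aestronglyMeasurable hv_meas).aemeasurable
      (continuous_pow k).aestronglyMeasurable]
  -- integrability of powers of the norm of `v`
  have hnormint : ∀ k : ℕ, Integrable (fun ω => ‖v ω‖ ^ k) P := by
    intro k
    refine ⟨(hv_meas.norm.aemeasurable.pow_const k).aestronglyMeasurable, ?_⟩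
    show (∫⁻ ω, (‖(‖v ω‖ ^ k)‖₊ : ENNReal) ∂P) < ⊤
    have heq : ∀ ω, (‖(‖v ω‖ ^ k)‖₊ : ENNReal) = (‖v ω‖₊ : ENNReal) ^ k := by
      intro ω
      rw [nnnorm_pow, nnnorm_norm, ENNReal.coe_pow]
    rw [lintegral_congr heq]
    exact hv_mom k
  -- uniform operator norm bound for the approximants
  have hψs_bound : ∀ j, ‖ψs j‖ ≤ ‖ψ‖ + 1 := by
    intro j
    have h1 : ‖ψs j‖ - ‖ψ‖ ≤ ‖ψs j - ψ‖ := norm_sub_norm_le _ _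
    have h2 : (1 : ℝ) / (j + 1) ≤ 1 := by
      rw [div_le_one (by positivity)]
      exact le_add_of_nonneg_left (Nat.cast_nonneg j)
    linarith [hψs j]
  -- dominated convergence of the moments
  have hconv : ∀ k : ℕ, Tendsto (fun j => ∫ ω, (ψs j (v ω)) ^ k ∂P) atTop
      (𝓝 (∫ ω, (ψ (v ω)) ^ k ∂P)) := by
    intro k
    refine tendsto_integral_of_dominated_convergence
      (fun ω => ((‖ψ‖ + 1) * ‖v ω‖) ^ k) ?_ ?_ ?_ ?_
    · intro j
      exact ((ψs j).continuous.pow k).comp_aestronglyMeasurable hv_meas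
    · refine ((hnormint k).const_mul ((‖ψ‖ + 1) ^ k)).congr
        (Filter.Eventually.of_forall fun ω => ?_)
      exact (mul_pow _ _ _).symm
    · intro j
      refine Filter.Eventually.of_forall fun ω => ?_
      rw [norm_pow]
      refine pow_le_pow_left₀ (norm_nonneg _) ?_ k
      calc ‖ψs j (v ω)‖ ≤ ‖ψs j‖ * ‖v ω‖ := (ψs j).le_opNorm _
        _ ≤ (‖ψ‖ + 1) * ‖v ω‖ :=
          mul_le_mul_of_nonneg_right (hψs_bound j) (norm_nonneg _)
    · refine Filter.Eventually.of_forall fun ω => ?_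
      have hb : ∀ j : ℕ, ‖ψs j (v ω) - ψ (v ω)‖ ≤ (1 / ((j : ℝ) + 1)) * ‖v ω‖ := by
        intro j
        have h1 : ‖(ψs j - ψ) (v ω)‖ ≤ ‖ψs j - ψ‖ * ‖v ω‖ := (ψs j - ψ).le_opNorm _
        simp only [ContinuousLinearMap.sub_apply] at h1
        exact h1.trans (mul_le_mul_of_nonneg_right (le_of_lt (hψs j)) (norm_nonneg _))
      have h0 : Tendsto (fun j : ℕ => (1 / ((j : ℝ) + 1)) * ‖v ω‖) atTop (𝓝 0) := by
        simpa using tendsto_one_div_add_atTop_nhds_zero_nat.mul_const ‖v ω‖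
      have hpt : Tendsto (fun j => ψs j (v ω)) atTop (𝓝 (ψ (v ω))) := by
        rw [tendsto_iff_norm_sub_tendsto_zero]
        exact squeeze_zero (fun j => norm_nonneg _) hb h0
      exact hpt.pow k
  -- the limiting moment sequence
  set M : ℕ → ℝ := fun k => ∫ ω, (ψ (v ω)) ^ k ∂P with hMdef
  have hM0 : M 0 = 1 := by simp [hMdef]
  have hrecM : ∀ k : ℕ, M (k + 2) = M 1 * M (k + 1) + (M 2 - M 1 ^ 2) * (k + 1) * M k := by
    intro k
    have h1 : ∀ j, ∫ ω, (ψs j (v ω)) ^ (k + 2) ∂P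
        = (∫ ω, (ψs j (v ω)) ^ 1 ∂P) * (∫ ω, (ψs j (v ω)) ^ (k + 1) ∂P)
          + ((∫ ω, (ψs j (v ω)) ^ 2 ∂P) - (∫ ω, (ψs j (v ω)) ^ 1 ∂P) ^ 2) * ((k : ℝ) + 1)
            * ∫ ω, (ψs j (v ω)) ^ k ∂P := by
      intro j
      rw [hμj, hμj, hμj, hμj, hμj]
      have h2 := CumAux.gauss_moment_rec (ms j) (vs j) (k + 1)
      rw [Nat.add_sub_cancel] at h2
      rw [h2, CumAux.gauss_moment_one (ms j) (vs j), CumAux.gauss_moment_two (ms j) (vs j)]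
      push_cast
      ring
    have ht1 : Tendsto (fun j => (∫ ω, (ψs j (v ω)) ^ 1 ∂P) * (∫ ω, (ψs j (v ω)) ^ (k + 1) ∂P)
          + ((∫ ω, (ψs j (v ω)) ^ 2 ∂P) - (∫ ω, (ψs j (v ω)) ^ 1 ∂P) ^ 2) * ((k : ℝ) + 1)
            * ∫ ω, (ψs j (v ω)) ^ k ∂P) atTop
        (𝓝 (M 1 * M (k + 1) + (M 2 - M 1 ^ 2) * ((k : ℝ) + 1) * M k)) :=
      ((hconv 1).mul (hconv (k + 1))).add
        ((((hconv 2).sub ((hconv 1).pow 2)).mul_const _).mul (hconv k))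
    have ht2 : Tendsto (fun j => ∫ ω, (ψs j (v ω)) ^ (k + 2) ∂P) atTop (𝓝 (M (k + 2))) :=
      hconv (k + 2)
    have hfun : (fun j => ∫ ω, (ψs j (v ω)) ^ (k + 2) ∂P)
        = fun j => (∫ ω, (ψs j (v ω)) ^ 1 ∂P) * (∫ ω, (ψs j (v ω)) ^ (k + 1) ∂P)
          + ((∫ ω, (ψs j (v ω)) ^ 2 ∂P) - (∫ ω, (ψs j (v ω)) ^ 1 ∂P) ^ 2) * ((k : ℝ) + 1)
            * ∫ ω, (ψs j (v ω)) ^ k ∂P := funext h1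
    exact tendsto_nhds_unique (hfun ▸ ht2) ht1
  have hfinal := CumAux.cumulant_sum_eq_zero M (M 1) (M 2 - M 1 ^ 2) hM0 rfl hrecM
    (Finset.univ : Finset (Fin n)) (by simpa using hn)
  exact hfinal
end
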